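/- Let w : μ ↦ μ' and w' : μ' ↦ μ'' be composable finite-variance evolutionary processes with relative fitnesses U and U'. If the pair (w, w') is weakly stationary, that is ⟨U'⟩_w(i) = U(i) for μ-almost every i, then U = 1 μ-a.e. (w is purely environmental) and ⟨U'⟩_w = 1 μ-a.e. Conversely, if U = 1 a.e. and ⟨U'⟩_w = 1 a.e., then the pair is weakly stationary. -/

import Mathlib

open MeasureTheory Real Set

/-- Weak stationarity characterization: for composable finite-variance processes
`w : μ ↦ μ'` and `w' : μ' ↦ μ''` with relative fitnesses `U`, `U'`,
the pair is weakly stationary (`⟨U'⟩_w = U` μ-a.e.) iff `U = 1` μ-a.e.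
(purely environmental) and `⟨U'⟩_w = 1` μ-a.e. -/
theorem weak_stationarity_characterization
    {I I' I'' : Type*} [MeasurableSpace I] [MeasurableSpace I'] [MeasurableSpace I'']
    (μ : Measure I) (μ' : Measure I') (μ'' : Measure I'')
    [IsFiniteMeasure μ] [IsFiniteMeasure μ'] [IsFiniteMeasure μ'']
    (hN : 0 < (μ univ).toReal) (hN' : 0 < (μ' univ).toReal) (hN'' : 0 < (μ'' univ).toReal)
    (w : I → Measure I') (w' : I' → Measure I'')
    (hwfin : ∀ i, IsFiniteMeasure (w i)) (hw'fin : ∀ i', IsFiniteMeasure (w' i'))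
    (hwm : ∀ B : Set I', MeasurableSet B → Measurable fun i => w i B)
    (hw'm : ∀ C : Set I'', MeasurableSet C → Measurable fun i' => w' i' C)
    (hdis : ∀ B : Set I', MeasurableSet B → μ' B = ∫⁻ i, w i B ∂μ)
    (hdis' : ∀ C : Set I'', MeasurableSet C → μ'' C = ∫⁻ i', w' i' C ∂μ') :
    let N := (μ univ).toReal
    let N' := (μ' univ).toReal
    let N'' := (μ'' univ).toReal
    let U : I → ℝ := fun i => (w i univ).toReal / (N' / N)
    let U' : I' → ℝ := fun i' => (w' i' univ).toReal / (N'' / N')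
    let lavg : I → ℝ := fun i => (∫ i', U' i' ∂(w i)) / (w i univ).toReal
    Integrable (fun i => (U i) ^ 2) μ →
    Integrable (fun i => U i * lavg i) μ →
    (((∀ᵐ i ∂μ, lavg i = U i) →
        (∀ᵐ i ∂μ, U i = 1) ∧ (∀ᵐ i ∂μ, lavg i = 1)) ∧
      (((∀ᵐ i ∂μ, U i = 1) ∧ (∀ᵐ i ∂μ, lavg i = 1)) →
        (∀ᵐ i ∂μ, lavg i = U i))) := by
  intro N N' N'' U U' lavg hU2 hUlavg
  have hNv : N = (μ univ).toReal := rfl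
  have hw : Measurable w := Measure.measurable_measure.mpr hwm
  -- measurability of U
  have hUm : Measurable U := ((hwm univ .univ).ennreal_toReal).div_const _
  -- g : I' → ENNReal
  set g : I' → ENNReal := fun i' => w' i' univ with hg_def
  have hgm : Measurable g := hw'm univ .univ
  have hgfin : ∀ i', g i' ≠ ⊤ := fun i' => (hw'fin i').measure_univ_lt_top.ne
  -- μ' = μ.bind w
  have hbind : μ' = μ.bind w := by
    ext B hB
    rw [hdis B hB, Measure.bind_apply hB hw.aemeasurable]
  -- first moment : ∫ U = N
  have hwuniv : ∫⁻ i, w i univ ∂μ = μ' univ := (hdis univ .univ).symm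
  have hmean : ∫ i, U i ∂μ = N := by
    have h1 : ∫ i, (w i univ).toReal ∂μ = N' := by
      rw [integral_toReal ((hwm univ .univ).aemeasurable)
        (Filter.Eventually.of_forall fun i => (hwfin i).measure_univ_lt_top), hwuniv]
    show (∫ i, (w i univ).toReal / (N' / N) ∂μ) = N
    rw [integral_div, h1]
    field_simp
    exact mul_div_cancel_left₀ N (ne_of_gt hN')
  -- F i = ∫⁻ g ∂(w i)
  set F : I → ENNReal := fun i => ∫⁻ i', g i' ∂(w i) with hF_def
  have hFm : Measurable F := (Measure.measurable_lintegral hgm).comp hw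
  have hFint : ∫⁻ i, F i ∂μ = μ'' univ := by
    rw [hF_def]
    have := Measure.lintegral_bind (f := g) hw.aemeasurable hgm.aemeasurable (m := μ)
    rw [← this, ← hbind, hdis' univ .univ]
  have hFae : ∀ᵐ i ∂μ, F i < ⊤ := ae_lt_top hFm (by rw [hFint]; exact measure_ne_top _ _)
  set c : ℝ := N'' / N' with hc_def
  have hc : 0 < c := div_pos hN'' hN'
  -- ∫ U' dν identity
  have hU'int : ∀ ν : Measure I', ∫ i', U' i' ∂ν = ((∫⁻ i', g i' ∂ν) / ENNReal.ofReal c).toReal := by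
    intro ν
    rw [integral_eq_lintegral_of_nonneg_ae
      (Filter.Eventually.of_forall fun i' => div_nonneg ENNReal.toReal_nonneg hc.le)
      (hgm.ennreal_toReal.div_const c).aestronglyMeasurable]
    congr 1
    have hpt : ∀ i', ENNReal.ofReal ((g i').toReal / c) = g i' * (ENNReal.ofReal c)⁻¹ := by
      intro i'
      rw [ENNReal.ofReal_div_of_pos hc, ENNReal.ofReal_toReal (hgfin i'), div_eq_mul_inv]
    simp only [hpt]
    rw [lintegral_mul_const' _ _ (ENNReal.inv_ne_top.mpr (ENNReal.ofReal_pos.mpr hc).ne'),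
      div_eq_mul_inv]
  -- pointwise: U i * lavg i = (F i / ofReal c).toReal * (N / N')
  have hpt : ∀ i, U i * lavg i = (F i / ENNReal.ofReal c).toReal * (N / N') := by
    intro i
    show (w i univ).toReal / (N' / N) * ((∫ i', U' i' ∂(w i)) / (w i univ).toReal)
        = (F i / ENNReal.ofReal c).toReal * (N / N')
    rw [hU'int (w i)]
    by_cases h0 : (w i univ).toReal = 0
    · have hz : w i = 0 := by
        have := (hwfin i).measure_univ_lt_top.ne
        have : w i univ = 0 := by
          rwa [ENNReal.toReal_eq_zero_iff, or_iff_left this] at h0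
        exact Measure.measure_univ_eq_zero.mp this
      simp [h0, hF_def, hz]
    · field_simp
      ring
  -- second cross moment: ∫ U * lavg = N
  have hcross : ∫ i, U i * lavg i ∂μ = N := by
    have hmeas : AEMeasurable (fun i => F i / ENNReal.ofReal c) μ :=
      (hFm.div_const _).aemeasurable
    have hlt : ∀ᵐ i ∂μ, F i / ENNReal.ofReal c < ⊤ := by
      filter_upwards [hFae] with i hi
      exact ENNReal.div_lt_top hi.ne (by simpa using hc)
    calc ∫ i, U i * lavg i ∂μ
        = ∫ i, (F i / ENNReal.ofReal c).toReal * (N / N') ∂μ := by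
          exact integral_congr_ae (Filter.Eventually.of_forall hpt)
      _ = (∫ i, (F i / ENNReal.ofReal c).toReal ∂μ) * (N / N') := integral_mul_const _ _
      _ = ((∫⁻ i, F i / ENNReal.ofReal c ∂μ)).toReal * (N / N') := by
          rw [integral_toReal hmeas hlt]
      _ = N := by
          have : ∫⁻ i, F i / ENNReal.ofReal c ∂μ = (∫⁻ i, F i ∂μ) / ENNReal.ofReal c := by
            simp only [div_eq_mul_inv]
            exact lintegral_mul_const' _ _ (ENNReal.inv_ne_top.mpr (ENNReal.ofReal_pos.mpr hc).ne')
          rw [this, hFint, ENNReal.toReal_div, ENNReal.toReal_ofReal hc.le]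
          show N'' / c * (N / N') = N
          rw [hc_def]; field_simp
          exact mul_div_cancel_left₀ N (mul_ne_zero (ne_of_gt hN'') (ne_of_gt hN'))
  -- now the two directions
  constructor
  · intro hstat
    have hUint : Integrable U μ := by
      refine ((integrable_const (1:ℝ)).add hU2).mono' hUm.aestronglyMeasurable ?_
      refine Filter.Eventually.of_forall fun i => ?_
      simp only [Pi.add_apply, Real.norm_eq_abs]
      nlinarith [sq_nonneg (|U i| - 1), sq_abs (U i), abs_nonneg (U i)]
    have hU2v : ∫ i, U i ^ 2 ∂μ = N := by
      rw [← hcross]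
      refine integral_congr_ae ?_
      filter_upwards [hstat] with i hi
      rw [hi]; ring
    have hdiffInt : Integrable (fun i => (U i - 1) ^ 2) μ := by
      have : (fun i => (U i - 1) ^ 2) = fun i => U i ^ 2 - 2 * U i + 1 := by
        funext i; ring
      rw [this]
      exact (hU2.sub (hUint.const_mul 2)).add (integrable_const 1)
    have hvar : ∫ i, (U i - 1) ^ 2 ∂μ = 0 := by
      have : ∫ i, (U i - 1) ^ 2 ∂μ = ∫ i, (U i ^ 2 - 2 * U i + 1) ∂μ := by
        refine integral_congr_ae (Filter.Eventually.of_forall fun i => by ring)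
      rw [this]
      have h3 : ∫ i, (U i ^ 2 - 2 * U i + 1) ∂μ
          = (∫ i, (U i ^ 2 - 2 * U i) ∂μ) + ∫ _i, (1:ℝ) ∂μ :=
        integral_add (hU2.sub (hUint.const_mul 2)) (integrable_const 1)
      have h4 : ∫ i, (U i ^ 2 - 2 * U i) ∂μ
          = (∫ i, U i ^ 2 ∂μ) - ∫ i, 2 * U i ∂μ := integral_sub hU2 (hUint.const_mul 2)
      rw [h3, h4, integral_const_mul 2 U, hU2v, hmean, integral_const, smul_eq_mul, mul_one]
      rw [hNv, Measure.real]; ring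
    have hzero : ∀ᵐ i ∂μ, (U i - 1) ^ 2 = 0 :=
      (integral_eq_zero_iff_of_nonneg (fun i => sq_nonneg _) hdiffInt).mp hvar
    have hU1 : ∀ᵐ i ∂μ, U i = 1 := by
      filter_upwards [hzero] with i hi
      have := pow_eq_zero_iff (n := 2) (by norm_num) |>.mp hi
      linarith [sub_eq_zero.mp this]
    refine ⟨hU1, ?_⟩
    filter_upwards [hstat, hU1] with i h1 h2
    rw [h1, h2]
  · rintro ⟨h1, h2⟩
    filter_upwards [h1, h2] with i e1 e2
    rw [e1, e2]
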